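/- Let F ∈ ℝ[x_0,...,x_n] be a form of degree d with F(e) = 1, hyperbolic with respect to e = (1,0,...,0). Write Res_{t_1}(f_re, f_im) = t_2^p · R_F with t_2 not dividing R_F. Then R_F has constant sign on ℝ^{n+1}: it is everywhere nonnegative or everywhere nonpositive. -/

import Mathlib

open MvPolynomial

/-- A real univariate polynomial is real-rooted if all its complex roots are real. -/
def RealRooted (p : Polynomial ℝ) : Prop :=
  ∀ z : ℂ, Polynomial.aeval z p = 0 → z.im = 0

/-- Hyperbolicity of a form with respect to a point. -/
def Hyperbolic {n : ℕ} (F : MvPolynomial (Fin (n + 1)) ℝ) (e : Fin (n + 1) → ℝ) : Prop :=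
  MvPolynomial.eval e F ≠ 0 ∧
    ∀ a : Fin (n + 1) → ℝ,
      RealRooted
        (MvPolynomial.aeval
          (fun i => Polynomial.C (e i) * Polynomial.X - Polynomial.C (a i)) F)

/-- The Sylvester matrix of two polynomials `p`, `q`, regarded as having degrees `m` and `n`;
its determinant is the resultant of `p` and `q`. -/
def sylvester {R : Type*} [CommRing R] (p q : Polynomial R) (m n : ℕ) :
    Matrix (Fin (m + n)) (Fin (m + n)) R :=
  Matrix.of fun i j =>
    if (j : ℕ) < n then
      (if (j : ℕ) ≤ (i : ℕ) ∧ (i : ℕ) ≤ m + (j : ℕ) then p.coeff (m + (j : ℕ) - (i : ℕ)) else 0)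
    else
      (if (j : ℕ) - n ≤ (i : ℕ) ∧ (i : ℕ) ≤ n + ((j : ℕ) - n) then
        q.coeff (n + ((j : ℕ) - n) - (i : ℕ)) else 0)


section PolyOpen
open Polynomial

lemma sylvester_map {R S : Type*} [CommRing R] [CommRing S] (φ : R →+* S)
    (p q : Polynomial R) (m n : ℕ) :
    (_root_.sylvester p q m n).map φ = _root_.sylvester (p.map φ) (q.map φ) m n := by
  ext i j
  simp only [_root_.sylvester, Matrix.map_apply, Matrix.of_apply]
  split_ifs <;> simp [Polynomial.coeff_map]

lemma sylvester_entry {R : Type*} [CommRing R] (p q : Polynomial R) (m n : ℕ)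
    (hp : p.natDegree ≤ m) (hq : q.natDegree ≤ n) (i j : Fin (m + n)) :
    _root_.sylvester p q m n i j =
      (if (j : ℕ) < n then Polynomial.X ^ (j : ℕ) * reflect m p
        else Polynomial.X ^ ((j : ℕ) - n) * reflect n q).coeff i := by
  simp only [_root_.sylvester, Matrix.of_apply]
  split_ifs with h1 h2 h3
  · rw [Polynomial.coeff_X_pow_mul' , if_pos h2.1, coeff_reflect]
    congr 1
    rw [← revAtFun_eq, revAtFun]
    have : (i : ℕ) - (j : ℕ) ≤ m := by omega
    simp [Function.Embedding.coeFn_mk, this, if_pos this]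
    omega
  · rw [Polynomial.coeff_X_pow_mul']
    by_cases hij : (j : ℕ) ≤ (i : ℕ)
    · rw [if_pos hij, coeff_reflect]
      have hgt : m < (i : ℕ) - (j : ℕ) := by omega
      rw [← revAtFun_eq, revAtFun, if_neg (by omega)]
      exact (Polynomial.coeff_eq_zero_of_natDegree_lt (by omega)).symm
    · rw [if_neg hij]
  · rw [Polynomial.coeff_X_pow_mul', if_pos h3.1, coeff_reflect]
    congr 1
    rw [← revAtFun_eq, revAtFun]
    have : (i : ℕ) - ((j : ℕ) - n) ≤ n := by omega
    rw [if_pos this]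
    omega
  · rw [Polynomial.coeff_X_pow_mul']
    by_cases hij : (j : ℕ) - n ≤ (i : ℕ)
    · rw [if_pos hij, coeff_reflect]
      rw [← revAtFun_eq, revAtFun, if_neg (by omega)]
      exact (Polynomial.coeff_eq_zero_of_natDegree_lt (by omega)).symm
    · rw [if_neg hij]

lemma aux_reflect_invol {R : Type*} [CommRing R] (N : ℕ) (f : Polynomial R) :
    reflect N (reflect N f) = f := by
  ext i
  rw [coeff_reflect, coeff_reflect, revAt_invol]

lemma aux_reflect_eq_zero_iff {R : Type*} [CommRing R] {N : ℕ} {f : Polynomial R} :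
    reflect N f = 0 ↔ f = 0 := by
  constructor
  · intro h
    have := aux_reflect_invol N f
    rw [h, reflect_zero] at this
    exact this.symm
  · rintro rfl; exact reflect_zero

lemma sylvester_det_ne_zero {K : Type*} [Field K] (p q : Polynomial K) (m n : ℕ)
    (hm : 0 < m) (hpm : p.natDegree = m) (hq : q.natDegree ≤ n) (hq0 : q ≠ 0)
    (hcop : IsCoprime p q) : (_root_.sylvester p q m n).det ≠ 0 := by
  classical
  intro hdet
  obtain ⟨v, hv, hmul⟩ := (Matrix.exists_mulVec_eq_zero_iff (M := _root_.sylvester p q m n)).2 hdet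
  have hp0 : p ≠ 0 := fun h => by simp [h] at hpm; omega
  set A : Polynomial K :=
    ∑ j : Fin (m + n), if (j : ℕ) < n then Polynomial.C (v j) * Polynomial.X ^ (j : ℕ) else 0
    with hA
  set B : Polynomial K :=
    ∑ j : Fin (m + n), if (j : ℕ) < n then 0 else Polynomial.C (v j) * Polynomial.X ^ ((j : ℕ) - n)
    with hB
  -- the combination
  have hcomb : A * reflect m p + B * reflect n q
      = ∑ j : Fin (m + n), Polynomial.C (v j) *
          (if (j : ℕ) < n then Polynomial.X ^ (j : ℕ) * reflect m p
            else Polynomial.X ^ ((j : ℕ) - n) * reflect n q) := by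
    rw [hA, hB, Finset.sum_mul, Finset.sum_mul, ← Finset.sum_add_distrib]
    refine Finset.sum_congr rfl fun j _ => ?_
    split_ifs <;> ring
  -- all low coefficients vanish
  have hcoeff : ∀ i : Fin (m + n), (A * reflect m p + B * reflect n q).coeff (i : ℕ) = 0 := by
    intro i
    rw [hcomb, Polynomial.finset_sum_coeff]
    have := congrFun hmul i
    rw [Matrix.mulVec, dotProduct] at this
    simp only [Pi.zero_apply] at this
    rw [← this]
    refine Finset.sum_congr rfl fun j _ => ?_
    rw [Polynomial.coeff_C_mul, sylvester_entry p q m n hpm.le hq i j, mul_comm]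
  -- degree bounds
  have hA0' : n = 0 → A = 0 := by
    intro hn
    rw [hA]
    exact Finset.sum_eq_zero fun j _ => by rw [if_neg (by omega)]
  have hdegA : A.natDegree ≤ n - 1 := by
    by_cases hn : n = 0
    · rw [hA0' hn]; simp
    · refine Polynomial.natDegree_sum_le_of_forall_le _ _ fun j _ => ?_
      split_ifs with h
      · exact (Polynomial.natDegree_C_mul_X_pow_le _ _).trans (by omega)
      · simp
  have hdegB : B.natDegree ≤ m - 1 := by
    refine Polynomial.natDegree_sum_le_of_forall_le _ _ fun j _ => ?_
    split_ifs with h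
    · simp
    · exact (Polynomial.natDegree_C_mul_X_pow_le _ _).trans (by omega)
  -- the polynomial identity
  have hrp : (reflect m p).natDegree ≤ m := by
    rw [Polynomial.natDegree_le_iff_coeff_eq_zero]
    intro N hN
    rw [coeff_reflect, ← revAtFun_eq, revAtFun, if_neg (by omega)]
    exact Polynomial.coeff_eq_zero_of_natDegree_lt (by omega)
  have hrq : (reflect n q).natDegree ≤ n := by
    rw [Polynomial.natDegree_le_iff_coeff_eq_zero]
    intro N hN
    rw [coeff_reflect, ← revAtFun_eq, revAtFun, if_neg (by omega)]
    exact Polynomial.coeff_eq_zero_of_natDegree_lt (by omega)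
  have hdeg1 : (A * reflect m p).natDegree < m + n := by
    by_cases hn : n = 0
    · rw [hA0' hn, zero_mul]
      simpa using by omega
    · exact lt_of_le_of_lt (Polynomial.natDegree_mul_le.trans (add_le_add hdegA hrp)) (by omega)
  have hdeg2 : (B * reflect n q).natDegree < m + n := by
    exact lt_of_le_of_lt (Polynomial.natDegree_mul_le.trans (add_le_add hdegB hrq)) (by omega)
  have hzero : A * reflect m p + B * reflect n q = 0 := by
    ext i
    by_cases hi : i < m + n
    · exact hcoeff ⟨i, hi⟩
    · rw [Polynomial.coeff_zero]
      refine Polynomial.coeff_eq_zero_of_natDegree_lt ?_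
      have := (Polynomial.natDegree_add_le _ _).trans_lt (max_lt hdeg1 hdeg2)
      omega
  -- conclude A = 0 and B = 0
  have hAB : A = 0 ∧ B = 0 := by
    by_cases hn : n = 0
    · have hA0 : A = 0 := hA0' hn
      refine ⟨hA0, ?_⟩
      rw [hA0, zero_mul, zero_add] at hzero
      rcases mul_eq_zero.1 hzero with h | h
      · exact h
      · exact absurd (aux_reflect_eq_zero_iff.1 h) hq0
    · have hn' : 0 < n := Nat.pos_of_ne_zero hn
      set A₁ := reflect (n-1) A with hA₁
      set B₁ := reflect (m-1) B with hB₁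
      have hdA₁ : A₁.natDegree ≤ n - 1 := by
        rw [Polynomial.natDegree_le_iff_coeff_eq_zero]
        intro N hN
        rw [hA₁, coeff_reflect, ← revAtFun_eq, revAtFun, if_neg (by omega)]
        exact Polynomial.coeff_eq_zero_of_natDegree_lt (by omega)
      have hdB₁ : B₁.natDegree ≤ m - 1 := by
        rw [Polynomial.natDegree_le_iff_coeff_eq_zero]
        intro N hN
        rw [hB₁, coeff_reflect, ← revAtFun_eq, revAtFun, if_neg (by omega)]
        exact Polynomial.coeff_eq_zero_of_natDegree_lt (by omega)
      have key : A₁ * p + B₁ * q = 0 := by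
        have e1 : reflect ((n-1) + m) (A₁ * p) = A * reflect m p := by
          rw [Polynomial.reflect_mul _ _ hdA₁ hpm.le, hA₁, aux_reflect_invol]
        have e2 : reflect ((m-1) + n) (B₁ * q) = B * reflect n q := by
          rw [Polynomial.reflect_mul _ _ hdB₁ hq, hB₁, aux_reflect_invol]
        have hmn : (n-1) + m = (m-1) + n := by omega
        have : reflect ((n-1)+m) (A₁ * p + B₁ * q) = 0 := by
          rw [reflect_add, e1, hmn, e2, hzero]
        have := congrArg (reflect ((n-1)+m)) this
        rwa [aux_reflect_invol, reflect_zero] at this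
      have hB₁0 : B₁ = 0 := by
        by_contra hB₁0
        have hdvd : p ∣ B₁ * q := by
          refine ⟨-A₁, ?_⟩
          have : B₁ * q = -(A₁ * p) := by linear_combination key
          rw [this]; ring
        have := hcop.dvd_of_dvd_mul_right hdvd
        have := Polynomial.natDegree_le_of_dvd this hB₁0
        omega
      have hA₁0 : A₁ = 0 := by
        rw [hB₁0, zero_mul, add_zero, mul_eq_zero] at key
        exact key.resolve_right hp0
      constructor
      · have := congrArg (reflect (n-1)) hA₁0
        rwa [hA₁, aux_reflect_invol, reflect_zero] at this
      · have := congrArg (reflect (m-1)) hB₁0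
        rwa [hB₁, aux_reflect_invol, reflect_zero] at this
  -- recover v = 0
  apply hv
  funext j
  by_cases hj : (j : ℕ) < n
  · have : A.coeff (j : ℕ) = v j := by
      rw [hA, Polynomial.finset_sum_coeff]
      rw [Finset.sum_eq_single j]
      · rw [if_pos hj, Polynomial.coeff_C_mul, Polynomial.coeff_X_pow, if_pos rfl, mul_one]
      · intro j' _ hj'
        split_ifs with h
        · rw [Polynomial.coeff_C_mul, Polynomial.coeff_X_pow, if_neg (fun hc => hj' (Fin.ext hc.symm)), mul_zero]
        · simp
      · intro h; exact absurd (Finset.mem_univ j) h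
    rw [← this, hAB.1, Polynomial.coeff_zero, Pi.zero_apply]
  · have : B.coeff ((j : ℕ) - n) = v j := by
      rw [hB, Polynomial.finset_sum_coeff]
      rw [Finset.sum_eq_single j]
      · rw [if_neg hj, Polynomial.coeff_C_mul, Polynomial.coeff_X_pow, if_pos rfl, mul_one]
      · intro j' _ hj'
        split_ifs with h
        · simp
        · rw [Polynomial.coeff_C_mul, Polynomial.coeff_X_pow, if_neg (fun hc => hj' (Fin.ext (by omega))), mul_zero]
      · intro h; exact absurd (Finset.mem_univ j) h
    rw [← this, hAB.2, Polynomial.coeff_zero, Pi.zero_apply]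

section hPoly
variable {n d : ℕ} (F : MvPolynomial (Fin (n + 1)) ℝ) (a : Fin n → ℝ)

noncomputable def hPoly : Polynomial ℝ :=
  MvPolynomial.aeval (Fin.cons Polynomial.X (fun i => Polynomial.C (a i))) F

lemma hPoly_eq_sum : hPoly F a =
    ∑ m ∈ F.support,
      Polynomial.C (MvPolynomial.coeff m F * ∏ i : Fin n, a i ^ m i.succ)
        * Polynomial.X ^ (m 0) := by
  rw [hPoly]
  conv_lhs => rw [← MvPolynomial.support_sum_monomial_coeff F]
  rw [map_sum]
  refine Finset.sum_congr rfl fun m _ => ?_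
  rw [MvPolynomial.aeval_monomial, Finsupp.prod_pow, Fin.prod_univ_succ]
  simp only [Fin.cons_zero, Fin.cons_succ]
  simp only [← Polynomial.C_pow, ← map_prod, Polynomial.algebraMap_eq]
  rw [Polynomial.C_mul]
  ring

lemma hPoly_coeff (k : ℕ) : (hPoly F a).coeff k =
    ∑ m ∈ F.support,
      if m 0 = k then MvPolynomial.coeff m F * ∏ i : Fin n, a i ^ m i.succ else 0 := by
  rw [hPoly_eq_sum, Polynomial.finset_sum_coeff]
  refine Finset.sum_congr rfl fun m _ => ?_
  rw [Polynomial.coeff_C_mul, Polynomial.coeff_X_pow]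
  split_ifs with h1 h2 h3 <;> simp_all

lemma degree_eq_sum_univ {N : ℕ} (m : Fin N →₀ ℕ) : m.degree = ∑ i : Fin N, m i := by
  rw [Finsupp.degree]
  exact Finset.sum_subset (Finset.subset_univ _) fun i _ hi => Finsupp.notMem_support_iff.1 hi

variable {F} in
lemma hPoly_natDegree_le (hhom : F.IsHomogeneous d) : (hPoly F a).natDegree ≤ d := by
  rw [hPoly_eq_sum]
  refine Polynomial.natDegree_sum_le_of_forall_le _ _ fun m hm => ?_
  refine (Polynomial.natDegree_C_mul_X_pow_le _ _).trans ?_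
  have hdeg : m.degree = d := by
    by_contra h
    exact (MvPolynomial.mem_support_iff.1 hm) (hhom.coeff_eq_zero h)
  calc m 0 ≤ m.degree := Finsupp.le_degree 0 m
    _ = d := hdeg

variable {F} in
lemma hPoly_coeff_d (hhom : F.IsHomogeneous d) :
    (hPoly F a).coeff d = MvPolynomial.eval (fun i => if i = 0 then (1:ℝ) else 0) F := by
  rw [hPoly_coeff, MvPolynomial.eval_eq']
  refine Finset.sum_congr rfl fun m hm => ?_
  have hdeg : m.degree = d := by
    by_contra h
    exact (MvPolynomial.mem_support_iff.1 hm) (hhom.coeff_eq_zero h)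
  rw [degree_eq_sum_univ, Fin.sum_univ_succ] at hdeg
  rw [Fin.prod_univ_succ]
  simp only [if_pos rfl, one_pow, one_mul]
  by_cases hA : ∀ i : Fin n, m i.succ = 0
  · have h0 : m 0 = d := by
      rw [← hdeg, Finset.sum_eq_zero fun i _ => hA i, add_zero]
    rw [if_pos h0]
    have : ∀ i : Fin n, (if (i.succ : Fin (n+1)) = 0 then (1:ℝ) else 0) ^ m i.succ = 1 := by
      intro i
      rw [hA i, pow_zero]
    rw [Finset.prod_congr rfl fun i _ => this i, Finset.prod_const_one, mul_one]
    rw [Finset.prod_congr rfl fun i _ => by rw [hA i, pow_zero], Finset.prod_const_one, mul_one]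
    simp
  · push_neg at hA
    obtain ⟨i0, hi0⟩ := hA
    have h0 : m 0 ≠ d := by
      have : 0 < ∑ i : Fin n, m i.succ :=
        Finset.sum_pos' (fun i _ => Nat.zero_le _) ⟨i0, Finset.mem_univ _, Nat.pos_of_ne_zero hi0⟩
      omega
    rw [if_neg h0]
    have : ∏ i : Fin n, (if (i.succ : Fin (n+1)) = 0 then (1:ℝ) else 0) ^ m i.succ = 0 := by
      refine Finset.prod_eq_zero (Finset.mem_univ i0) ?_
      rw [if_neg (Fin.succ_ne_zero i0), zero_pow hi0]
    rw [this]
    simp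


lemma hPoly_aeval_complex (w : ℂ) :
    Polynomial.aeval w (hPoly F a)
      = MvPolynomial.aeval (Fin.cons w (fun i => (a i : ℂ))) F := by
  rw [hPoly]
  rw [show Polynomial.aeval w (MvPolynomial.aeval
      (Fin.cons Polynomial.X (fun i => Polynomial.C (a i))) F)
    = ((Polynomial.aeval w).comp
        (MvPolynomial.aeval (Fin.cons Polynomial.X (fun i => Polynomial.C (a i))))) F from rfl]
  rw [MvPolynomial.comp_aeval]
  have : (fun i => Polynomial.aeval w ((Fin.cons Polynomial.X (fun i => Polynomial.C (a i)) : Fin (n+1) → Polynomial ℝ) i))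
      = (Fin.cons w (fun i => (a i : ℂ)) : Fin (n+1) → ℂ) := by
    funext i
    refine Fin.cases ?_ (fun j => ?_) i <;> simp
  rw [this]

section main
variable {n d : ℕ}

lemma det_eval_ne_zero (hd : 0 < d)
    (F : MvPolynomial (Fin (n + 1)) ℝ) (hhom : F.IsHomogeneous d)
    (hF : MvPolynomial.eval (fun i => if i = 0 then (1:ℝ) else 0) F = 1)
    (hyp : ∀ a : Fin (n + 1) → ℝ,
      ∀ z : ℂ, Polynomial.aeval z
        (MvPolynomial.aeval
          (fun i => Polynomial.C (if i = 0 then (1:ℝ) else 0) * Polynomial.X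
            - Polynomial.C (a i)) F) = 0 → z.im = 0)
    (fre fim : Polynomial (MvPolynomial (Fin (n + 1)) ℝ))
    (hdecomp : ∀ (s₁ s₂ : ℝ) (a : Fin n → ℝ),
      MvPolynomial.aeval
          (Fin.cons ((s₁ : ℂ) + (s₂ : ℂ) * Complex.I) (fun i => (a i : ℂ))) F
        = (((fre.map (MvPolynomial.eval (Fin.cons s₂ a))).eval s₁ : ℝ) : ℂ)
          + (((fim.map (MvPolynomial.eval (Fin.cons s₂ a))).eval s₁ : ℝ) : ℂ) * Complex.I)
    (b : Fin (n + 1) → ℝ) (hb : b 0 ≠ 0) :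
    MvPolynomial.eval b ((_root_.sylvester fre fim d (d-1)).det) ≠ 0 := by
  classical
  set s₂ : ℝ := b 0 with hs₂
  set a : Fin n → ℝ := Fin.tail b with ha
  have hbc : (Fin.cons s₂ a : Fin (n+1) → ℝ) = b := Fin.cons_self_tail b
  set ev : MvPolynomial (Fin (n + 1)) ℝ →+* ℝ := (MvPolynomial.eval b : _) with hev
  set P : Polynomial ℝ := fre.map ev with hP
  set Q : Polynomial ℝ := fim.map ev with hQ
  -- step 1 : evaluation commutes with the determinant
  have hdet : MvPolynomial.eval b ((_root_.sylvester fre fim d (d-1)).det)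
      = (_root_.sylvester P Q d (d-1)).det := by
    rw [show MvPolynomial.eval b ((_root_.sylvester fre fim d (d-1)).det)
        = ev ((_root_.sylvester fre fim d (d-1)).det) from rfl]
    rw [RingHom.map_det, RingHom.mapMatrix_apply, sylvester_map]
  rw [hdet]
  -- the univariate polynomial h
  set h : Polynomial ℝ := hPoly F a with hh
  have hroots : ∀ z : ℂ, Polynomial.aeval z h = 0 → z.im = 0 := by
    intro z hz
    refine hyp (Fin.cons 0 (fun i => -(a i))) z ?_
    have : (fun i => Polynomial.C (if i = 0 then (1:ℝ) else 0) * Polynomial.X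
        - Polynomial.C ((Fin.cons 0 (fun i => -(a i)) : Fin (n+1) → ℝ) i))
        = (Fin.cons Polynomial.X (fun i => Polynomial.C (a i)) : Fin (n+1) → Polynomial ℝ) := by
      funext i
      refine Fin.cases ?_ (fun j => ?_) i <;> simp [Fin.succ_ne_zero]
    rw [this]
    exact hz
  -- h is monic of degree d
  have hcd : h.coeff d = 1 := by rw [hh, hPoly_coeff_d a hhom, hF]
  have hdle : h.natDegree ≤ d := hPoly_natDegree_le a hhom
  have hdeg : h.natDegree = d :=
    le_antisymm hdle (Polynomial.le_natDegree_of_ne_zero (by rw [hcd]; exact one_ne_zero))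
  have hmonic : h.Monic := by
    rw [Polynomial.Monic, Polynomial.leadingCoeff, hdeg, hcd]
  -- the complex polynomial g
  set hC : Polynomial ℂ := h.map (algebraMap ℝ ℂ) with hhC
  set g : Polynomial ℂ := hC.comp (Polynomial.X + Polynomial.C ((s₂:ℂ) * Complex.I)) with hg
  have hgP : g = P.map (algebraMap ℝ ℂ)
      + Polynomial.C Complex.I * Q.map (algebraMap ℝ ℂ) := by
    apply Polynomial.eq_of_infinite_eval_eq
    apply Set.Infinite.mono (s := Set.range (fun x : ℝ => (x : ℂ)))
    swap
    · exact Set.infinite_range_of_injective Complex.ofReal_injective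
    rintro _ ⟨s₁, rfl⟩
    simp only [Set.mem_setOf_eq]
    have lhs : g.eval (s₁:ℂ) = Polynomial.aeval ((s₁:ℂ) + (s₂:ℂ) * Complex.I) h := by
      rw [hg, Polynomial.eval_comp]
      simp only [Polynomial.eval_add, Polynomial.eval_X, Polynomial.eval_C]
      rw [Polynomial.aeval_def, ← Polynomial.eval_map]
    have hPev : ∀ (r : Polynomial ℝ) (x : ℝ),
        (r.map (algebraMap ℝ ℂ)).eval (x:ℂ) = ((r.eval x : ℝ) : ℂ) := by
      intro r x
      rw [Polynomial.eval_map, show ((x:ℝ):ℂ) = algebraMap ℝ ℂ x from rfl,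
        Polynomial.eval₂_at_apply]
      rfl
    rw [lhs, hh, hPoly_aeval_complex, hdecomp s₁ s₂ a]
    rw [Polynomial.eval_add, Polynomial.eval_mul, Polynomial.eval_C, hPev, hPev]
    have : (Fin.cons s₂ a : Fin (n+1) → ℝ) = b := hbc
    rw [this]
    ring
  -- coefficients of P and Q from g
  have hgc : ∀ k, g.coeff k = ((P.coeff k : ℂ)) + Complex.I * (Q.coeff k : ℂ) := by
    intro k
    rw [hgP, Polynomial.coeff_add, Polynomial.coeff_C_mul, Polynomial.coeff_map,
      Polynomial.coeff_map]
    norm_num [Complex.coe_algebraMap]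
  have hPc : ∀ k, P.coeff k = (g.coeff k).re := by
    intro k; rw [hgc k]; simp
  have hQc : ∀ k, Q.coeff k = (g.coeff k).im := by
    intro k; rw [hgc k]; simp
  -- g is monic of degree d
  have hCmonic : hC.Monic := hmonic.map _
  have hCdeg : hC.natDegree = d := by
    rw [hhC, Polynomial.natDegree_map_eq_of_injective (algebraMap ℝ ℂ).injective, hdeg]
  have hgmonic : g.Monic := hCmonic.comp_X_add_C _
  have hgdeg : g.natDegree = d := by
    rw [hg, ← Polynomial.taylor_apply, Polynomial.natDegree_taylor, hCdeg]
  have hgcd : g.coeff d = 1 := by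
    have := hgmonic
    rw [Polynomial.Monic, Polynomial.leadingCoeff, hgdeg] at this
    exact this
  have hgchigh : ∀ k, d < k → g.coeff k = 0 := fun k hk =>
    Polynomial.coeff_eq_zero_of_natDegree_lt (by omega)
  -- degrees of P and Q
  have hPcd : P.coeff d = 1 := by rw [hPc, hgcd]; simp
  have hPdeg : P.natDegree = d := by
    refine le_antisymm ?_ (Polynomial.le_natDegree_of_ne_zero (by rw [hPcd]; exact one_ne_zero))
    rw [Polynomial.natDegree_le_iff_coeff_eq_zero]
    intro N hN
    rw [hPc, hgchigh N hN]; simp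
  have hQdeg : Q.natDegree ≤ d - 1 := by
    rw [Polynomial.natDegree_le_iff_coeff_eq_zero]
    intro N hN
    rcases Nat.lt_or_ge d N with hdN | hdN
    · rw [hQc, hgchigh N hdN]; simp
    · have : N = d := by omega
      subst this
      rw [hQc, hgcd]; simp
  -- no common complex root
  have hnoroot : ∀ z : ℂ, ¬((P.map (algebraMap ℝ ℂ)).eval z = 0
      ∧ (Q.map (algebraMap ℝ ℂ)).eval z = 0) := by
    rintro z ⟨hz1, hz2⟩
    have him : ∀ w : ℂ, (P.map (algebraMap ℝ ℂ)).eval w = 0 →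
        (Q.map (algebraMap ℝ ℂ)).eval w = 0 → w.im + s₂ = 0 := by
      intro w hw1 hw2
      have hgw : g.eval w = 0 := by
        rw [hgP, Polynomial.eval_add, Polynomial.eval_mul, Polynomial.eval_C, hw1, hw2]
        ring
      have : Polynomial.aeval (w + (s₂:ℂ) * Complex.I) h = 0 := by
        rw [Polynomial.aeval_def, ← Polynomial.eval_map, ← hhC]
        rw [hg, Polynomial.eval_comp] at hgw
        simpa using hgw
      have := hroots _ this
      simpa using this
    have h1 : z.im + s₂ = 0 := him z hz1 hz2
    have hconj : ∀ (r : Polynomial ℝ) (w : ℂ), (r.map (algebraMap ℝ ℂ)).eval w = 0 →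
        (r.map (algebraMap ℝ ℂ)).eval ((starRingEnd ℂ) w) = 0 := by
      intro r w hw
      have : Polynomial.aeval ((starRingEnd ℂ) w) r = (starRingEnd ℂ) (Polynomial.aeval w r) :=
        Polynomial.aeval_conj r w
      rw [Polynomial.aeval_def, ← Polynomial.eval_map] at this
      rw [this, Polynomial.aeval_def, ← Polynomial.eval_map, hw, map_zero]
    have h2 : ((starRingEnd ℂ) z).im + s₂ = 0 :=
      him _ (hconj P z hz1) (hconj Q z hz2)
    rw [Complex.conj_im] at h2
    apply hb
    linarith
  -- Q is not zero
  have hQ0 : Q ≠ 0 := by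
    intro hQz
    have hdegpos : 0 < (P.map (algebraMap ℝ ℂ)).degree := by
      rw [Polynomial.degree_map_eq_of_injective (algebraMap ℝ ℂ).injective]
      rw [Polynomial.degree_eq_natDegree (fun hP0 => by simp [hP0] at hPcd), hPdeg]
      exact_mod_cast hd
    obtain ⟨z, hz⟩ := Complex.exists_root hdegpos
    exact hnoroot z ⟨hz, by rw [hQz]; simp⟩
  have hP0 : P ≠ 0 := fun hP0 => by simp [hP0] at hPcd
  -- coprimality
  have hcop : IsCoprime P Q := by
    rw [← EuclideanDomain.gcd_isUnit_iff]
    by_contra hunit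
    have hgcd0 : EuclideanDomain.gcd P Q ≠ 0 := by
      intro h0
      exact hP0 (EuclideanDomain.gcd_eq_zero_iff.1 h0).1
    have hdegpos : 0 < ((EuclideanDomain.gcd P Q).map (algebraMap ℝ ℂ)).degree := by
      rw [Polynomial.degree_map_eq_of_injective (algebraMap ℝ ℂ).injective]
      rcases lt_or_eq_of_le (Polynomial.zero_le_degree_iff.2 hgcd0) with h | h
      · exact h
      · exact absurd (Polynomial.isUnit_iff_degree_eq_zero.2 h.symm) hunit
    obtain ⟨z, hz⟩ := Complex.exists_root hdegpos
    refine hnoroot z ⟨?_, ?_⟩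
    · obtain ⟨c, hc⟩ := EuclideanDomain.gcd_dvd_left P Q
      rw [hc, Polynomial.map_mul, Polynomial.eval_mul, hz.eq_zero, zero_mul]
    · obtain ⟨c, hc⟩ := EuclideanDomain.gcd_dvd_right P Q
      rw [hc, Polynomial.map_mul, Polynomial.eval_mul, hz.eq_zero, zero_mul]
  -- conclude
  exact sylvester_det_ne_zero P Q d (d-1) hd hPdeg hQdeg hQ0 hcop

end main

lemma exists_hyperplane_point (RF : MvPolynomial (Fin (n + 1)) ℝ)
    (hndvd : ¬ (MvPolynomial.X 0 : MvPolynomial (Fin (n + 1)) ℝ) ∣ RF) :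
    ∃ a : Fin n → ℝ, MvPolynomial.eval (Fin.cons 0 a) RF ≠ 0 := by
  by_contra hall
  push_neg at hall
  apply hndvd
  set q0 : MvPolynomial (Fin n) ℝ := (MvPolynomial.finSuccEquiv ℝ n RF).coeff 0 with hq0
  have hq0z : q0 = 0 := by
    apply MvPolynomial.funext
    intro a
    have := hall a
    rw [MvPolynomial.eval_eq_eval_mv_eval'] at this
    rw [← Polynomial.coeff_zero_eq_eval_zero, Polynomial.coeff_map] at this
    simpa [hq0] using this
  have hXdvd : Polynomial.X ∣ MvPolynomial.finSuccEquiv ℝ n RF :=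
    Polynomial.X_dvd_iff.2 hq0z
  obtain ⟨c, hc⟩ := hXdvd
  refine ⟨(MvPolynomial.finSuccEquiv ℝ n).symm c, ?_⟩
  have : RF = (MvPolynomial.finSuccEquiv ℝ n).symm (Polynomial.X * c) := by
    rw [← hc]
    exact ((MvPolynomial.finSuccEquiv ℝ n).symm_apply_apply RF).symm
  rw [this, map_mul]
  congr 1
  rw [← MvPolynomial.finSuccEquiv_X_zero (R := ℝ) (n := n)]
  exact (MvPolynomial.finSuccEquiv ℝ n).symm_apply_apply _

lemma seg_no_sign_change (RF : MvPolynomial (Fin (n + 1)) ℝ)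
    (key : ∀ b : Fin (n + 1) → ℝ, b 0 ≠ 0 → MvPolynomial.eval b RF ≠ 0)
    (b₁ b₂ : Fin (n + 1) → ℝ) (hsgn : b₁ 0 * b₂ 0 > 0)
    (h1 : MvPolynomial.eval b₁ RF < 0) (h2 : 0 < MvPolynomial.eval b₂ RF) : False := by
  set γ : ℝ → (Fin (n + 1) → ℝ) := fun t => (1 - t) • b₁ + t • b₂ with hγ
  have hγc : Continuous γ :=
    ((continuous_const.sub continuous_id).smul continuous_const).add
      (continuous_id.smul continuous_const)
  set f : ℝ → ℝ := fun t => MvPolynomial.eval (γ t) RF with hf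
  have hfc : Continuous f := (MvPolynomial.continuous_eval _).comp hγc
  have hf0 : f 0 = MvPolynomial.eval b₁ RF := by simp [hf, hγ]
  have hf1 : f 1 = MvPolynomial.eval b₂ RF := by simp [hf, hγ]
  have hmem : (0:ℝ) ∈ Set.Icc (f 0) (f 1) := by
    rw [hf0, hf1]
    exact ⟨h1.le, h2.le⟩
  obtain ⟨t, ht, hft⟩ := intermediate_value_Icc (by norm_num : (0:ℝ) ≤ 1)
    hfc.continuousOn hmem
  have hne : (γ t) 0 ≠ 0 := by
    have h01 : 0 ≤ t ∧ t ≤ 1 := ⟨ht.1, ht.2⟩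
    simp only [hγ, Pi.add_apply, Pi.smul_apply, smul_eq_mul]
    intro hzero
    rcases mul_pos_iff.1 hsgn with ⟨ha, hb⟩ | ⟨ha, hb⟩
    · have e1 : 0 ≤ (1-t) * b₁ 0 := mul_nonneg (by linarith) ha.le
      have e2 : 0 ≤ t * b₂ 0 := mul_nonneg h01.1 hb.le
      have e1' : (1-t) * b₁ 0 = 0 := by linarith
      have e2' : t * b₂ 0 = 0 := by linarith
      rcases mul_eq_zero.1 e1' with h | h
      · have ht1 : t = 1 := by linarith
        rw [ht1, one_mul] at e2'
        exact absurd e2' hb.ne'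
      · exact absurd h ha.ne'
    · have e1 : (1-t) * b₁ 0 ≤ 0 := mul_nonpos_of_nonneg_of_nonpos (by linarith) ha.le
      have e2 : t * b₂ 0 ≤ 0 := mul_nonpos_of_nonneg_of_nonpos h01.1 hb.le
      have e1' : (1-t) * b₁ 0 = 0 := by linarith
      have e2' : t * b₂ 0 = 0 := by linarith
      rcases mul_eq_zero.1 e1' with h | h
      · have ht1 : t = 1 := by linarith
        rw [ht1, one_mul] at e2'
        exact absurd e2' hb.ne
      · exact absurd h ha.ne
  exact key _ hne hft

lemma perturb_zero (RF : MvPolynomial (Fin (n + 1)) ℝ)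
    (b : Fin (n + 1) → ℝ) (hbne : MvPolynomial.eval b RF ≠ 0) (hb0 : b 0 = 0)
    (σ : ℝ) (hσ : σ ≠ 0) :
    ∃ b' : Fin (n + 1) → ℝ, b' 0 * σ > 0 ∧
      MvPolynomial.eval b' RF * MvPolynomial.eval b RF > 0 := by
  classical
  set ψ : ℝ → ℝ := fun t => MvPolynomial.eval (Function.update b 0 t) RF with hψ
  have hup : Continuous fun t : ℝ => Function.update b 0 t := by
    refine continuous_pi fun i => ?_
    simp only [Function.update_apply]
    split_ifs
    · exact continuous_id
    · exact continuous_const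
  have hψc : Continuous ψ := (MvPolynomial.continuous_eval _).comp hup
  have hψ0 : ψ 0 = MvPolynomial.eval b RF := by
    rw [hψ]
    simp only
    rw [← hb0, Function.update_eq_self]
  set S : Set ℝ := {t | 0 < ψ t * ψ 0} with hS
  have hSopen : IsOpen S := isOpen_lt continuous_const (hψc.mul continuous_const)
  have h0S : (0:ℝ) ∈ S := by
    rw [hS, Set.mem_setOf_eq]
    exact mul_self_pos.2 (hψ0 ▸ hbne)
  obtain ⟨δ, hδ, hball⟩ := Metric.isOpen_iff.1 hSopen 0 h0S
  set t₀ : ℝ := if 0 < σ then δ/2 else -(δ/2) with ht₀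
  have ht₀S : t₀ ∈ S := by
    apply hball
    rw [Metric.mem_ball, Real.dist_eq, sub_zero, ht₀]
    split_ifs <;> rw [abs_lt] <;> constructor <;> linarith
  refine ⟨Function.update b 0 t₀, ?_, ?_⟩
  · rw [Function.update_self, ht₀]
    rcases lt_or_gt_of_ne hσ with h | h
    · rw [if_neg (by linarith)]
      nlinarith
    · rw [if_pos h]
      nlinarith
  · have := ht₀S
    rw [hS, Set.mem_setOf_eq, hψ0] at this
    exact this

theorem RF_constant_sign_of_hyperbolic' {n d : ℕ} (hd : 0 < d)
    (F : MvPolynomial (Fin (n + 1)) ℝ) (hhom : F.IsHomogeneous d)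
    (e : Fin (n + 1) → ℝ) (he : e = fun i => if i = 0 then 1 else 0)
    (hF : MvPolynomial.eval e F = 1)
    (hyp : (MvPolynomial.eval e F ≠ 0 ∧
    ∀ a : Fin (n + 1) → ℝ,
      ∀ z : ℂ, Polynomial.aeval z (MvPolynomial.aeval
          (fun i => Polynomial.C (e i) * Polynomial.X - Polynomial.C (a i)) F) = 0 → z.im = 0))
    (fre fim : Polynomial (MvPolynomial (Fin (n + 1)) ℝ))
    (hdecomp : ∀ (s₁ s₂ : ℝ) (a : Fin n → ℝ),
      MvPolynomial.aeval
          (Fin.cons ((s₁ : ℂ) + (s₂ : ℂ) * Complex.I) (fun i => (a i : ℂ))) F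
        = (((fre.map (MvPolynomial.eval (Fin.cons s₂ a))).eval s₁ : ℝ) : ℂ)
          + (((fim.map (MvPolynomial.eval (Fin.cons s₂ a))).eval s₁ : ℝ) : ℂ) * Complex.I)
    (p : ℕ) (RF : MvPolynomial (Fin (n + 1)) ℝ)
    (hfact : (_root_.sylvester fre fim d (d - 1)).det = (MvPolynomial.X 0) ^ p * RF)
    (hndvd : ¬ (MvPolynomial.X 0 : MvPolynomial (Fin (n + 1)) ℝ) ∣ RF) :
    (∀ b : Fin (n + 1) → ℝ, 0 ≤ MvPolynomial.eval b RF) ∨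
      (∀ b : Fin (n + 1) → ℝ, MvPolynomial.eval b RF ≤ 0) := by
  subst he
  have key : ∀ b : Fin (n + 1) → ℝ, b 0 ≠ 0 → MvPolynomial.eval b RF ≠ 0 := by
    intro b hb0 hRF
    apply det_eval_ne_zero hd F hhom hF (fun a z hz => hyp.2 a z hz) fre fim hdecomp b hb0
    rw [hfact, map_mul, map_pow, MvPolynomial.eval_X, hRF, mul_zero]
  by_contra hcon
  push_neg at hcon
  obtain ⟨⟨u, hu⟩, ⟨w, hw⟩⟩ := hcon
  obtain ⟨a₀, hc⟩ := exists_hyperplane_point RF hndvd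
  set c : Fin (n+1) → ℝ := Fin.cons 0 a₀ with hcdef
  have hc0 : c 0 = 0 := rfl
  have hu' : ∃ u' : Fin (n+1) → ℝ, u' 0 ≠ 0 ∧ MvPolynomial.eval u' RF < 0 := by
    by_cases h : u 0 = 0
    · obtain ⟨b', hb1, hb2⟩ := perturb_zero RF u hu.ne h 1 one_ne_zero
      refine ⟨b', ?_, ?_⟩
      · intro h0; rw [h0, zero_mul] at hb1; exact lt_irrefl 0 hb1
      · nlinarith
    · exact ⟨u, h, hu⟩
  have hw' : ∃ w' : Fin (n+1) → ℝ, w' 0 ≠ 0 ∧ 0 < MvPolynomial.eval w' RF := by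
    by_cases h : w 0 = 0
    · obtain ⟨b', hb1, hb2⟩ := perturb_zero RF w hw.ne' h 1 one_ne_zero
      refine ⟨b', ?_, ?_⟩
      · intro h0; rw [h0, zero_mul] at hb1; exact lt_irrefl 0 hb1
      · nlinarith
    · exact ⟨w, h, hw⟩
  obtain ⟨u', hu'0, hu'neg⟩ := hu'
  obtain ⟨w', hw'0, hw'pos⟩ := hw'
  by_cases hsame : u' 0 * w' 0 > 0
  · exact seg_no_sign_change RF key u' w' hsame hu'neg hw'pos
  · rcases lt_or_gt_of_ne hc with hcneg | hcpos
    · obtain ⟨c', hc'0, hc'sgn⟩ := perturb_zero RF c hc hc0 (w' 0) hw'0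
      have hc'neg : MvPolynomial.eval c' RF < 0 := by nlinarith
      exact seg_no_sign_change RF key c' w' hc'0 hc'neg hw'pos
    · obtain ⟨c', hc'0, hc'sgn⟩ := perturb_zero RF c hc hc0 (u' 0) hu'0
      have hc'pos : 0 < MvPolynomial.eval c' RF := by nlinarith
      exact seg_no_sign_change RF key u' c' (by nlinarith) hu'neg hc'pos

end hPoly
end PolyOpen

/-- Let `F` be a form of degree `d` with `F(e) = 1`, `e = (1,0,…,0)`, hyperbolic with
respect to `e`. Setting `f_x(t) = F(t,x)` and decomposing `f_x(t₁+it₂) = f_re + i f_im`,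
write `Res_{t₁}(f_re, f_im) = t₂^p ⬝ R_F` with `t₂ ∤ R_F`. Then `R_F` has constant sign on
`ℝ^{n+1}`: it is everywhere nonnegative or everywhere nonpositive. -/
theorem RF_constant_sign_of_hyperbolic {n d : ℕ} (hd : 0 < d)
    (F : MvPolynomial (Fin (n + 1)) ℝ) (hhom : F.IsHomogeneous d)
    (e : Fin (n + 1) → ℝ) (he : e = fun i => if i = 0 then 1 else 0)
    (hF : MvPolynomial.eval e F = 1)
    (hyp : Hyperbolic F e)
    (fre fim : Polynomial (MvPolynomial (Fin (n + 1)) ℝ))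
    (hdecomp : ∀ (s₁ s₂ : ℝ) (a : Fin n → ℝ),
      MvPolynomial.aeval
          (Fin.cons ((s₁ : ℂ) + (s₂ : ℂ) * Complex.I) (fun i => (a i : ℂ))) F
        = (((fre.map (MvPolynomial.eval (Fin.cons s₂ a))).eval s₁ : ℝ) : ℂ)
          + (((fim.map (MvPolynomial.eval (Fin.cons s₂ a))).eval s₁ : ℝ) : ℂ) * Complex.I)
    (p : ℕ) (RF : MvPolynomial (Fin (n + 1)) ℝ)
    (hfact : (sylvester fre fim d (d - 1)).det = (MvPolynomial.X 0) ^ p * RF)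
    (hndvd : ¬ (MvPolynomial.X 0 : MvPolynomial (Fin (n + 1)) ℝ) ∣ RF) :
    (∀ b : Fin (n + 1) → ℝ, 0 ≤ MvPolynomial.eval b RF) ∨
      (∀ b : Fin (n + 1) → ℝ, MvPolynomial.eval b RF ≤ 0) := by
  exact RF_constant_sign_of_hyperbolic' hd F hhom e he hF
    ⟨hyp.1, fun a z hz => hyp.2 a z hz⟩ fre fim hdecomp p RF hfact hndvd
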